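/- Let G be a finite insoluble group with soluble radical R(G). For every v ∈ G \ R(G), (1 + deg(v))/(1 + deg(vR(G))) = |R(G)|, where deg(v) is the degree of v in Γ_S(G) and deg(vR(G)) is the degree of vR(G) in Γ_S(G/R(G)). -/

import Mathlib

open Subgroup

/-- The soluble radical of a group: the join of all soluble normal subgroups. -/
def solRadical (G : Type*) [Group G] : Subgroup G :=
  sSup {N : Subgroup G | N.Normal ∧ IsSolvable N}

instance solRadical_normal {G : Type*} [Group G] : (solRadical G).Normal := by
  constructor
  intro n hn g
  have h : solRadical G ≤ (solRadical G).comap (MulAut.conj g).toMonoidHom := by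
    apply sSup_le
    rintro N ⟨hnorm, hsol⟩ x hx
    simp only [Subgroup.mem_comap, MulEquiv.coe_toMonoidHom, MulAut.conj_apply]
    exact le_sSup (s := {N : Subgroup G | N.Normal ∧ IsSolvable N}) ⟨hnorm, hsol⟩
      (hnorm.conj_mem x hx g)
  simpa using h hn

/-- The solubilizer of an element `x`: all `g` such that `⟨x, g⟩` is soluble. -/
def solubilizer {G : Type*} [Group G] (x : G) : Set G :=
  {g : G | IsSolvable (Subgroup.closure ({x, g} : Set G))}

/-- The solubility graph: vertices are elements outside the soluble radical,
two distinct vertices adjacent iff they generate a soluble subgroup. -/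
def solGraph (G : Type*) [Group G] : SimpleGraph {x : G // x ∉ solRadical G} where
  Adj a b := a ≠ b ∧ IsSolvable (Subgroup.closure ({a.1, b.1} : Set G))
  symm := ⟨by rintro a b ⟨hne, hs⟩; exact ⟨hne.symm, by rwa [Set.pair_comm]⟩⟩
  loopless := ⟨by rintro a ⟨h, -⟩; exact h rfl⟩

noncomputable instance {G : Type*} [Group G] [Fintype G] :
    Fintype {x : G // x ∉ solRadical G} := Fintype.ofFinite _

/-- The degree of `x` in the solubility graph (as the number of its neighbours). -/
noncomputable def solDeg (G : Type*) [Group G] (x : G) : ℕ :=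
  {g : G | g ∉ solRadical G ∧ g ≠ x ∧
    IsSolvable (Subgroup.closure ({x, g} : Set G))}.ncard

/-- The number of edges of the solubility graph. -/
noncomputable def solEdges (G : Type*) [Group G] : ℕ :=
  (solGraph G).edgeSet.ncard

/-- The solubility degree of a finite group. -/
noncomputable def Ps (G : Type*) [Group G] : ℚ :=
  (Nat.card {p : G × G // IsSolvable (Subgroup.closure ({p.1, p.2} : Set G))} : ℚ) /
    (Nat.card G : ℚ) ^ 2


lemma solvable_of_le {G : Type*} [Group G] {H K : Subgroup G} (h : H ≤ K)
    (hK : IsSolvable K) : IsSolvable H :=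
  by haveI : Group.IsSolvable K := hK; exact solvable_of_solvable_injective (Subgroup.inclusion_injective h)

lemma isSolvable_of_quot {G : Type*} [Group G] (N : Subgroup G) [N.Normal]
    (h1 : IsSolvable N) (h2 : IsSolvable (G ⧸ N)) : IsSolvable G :=
  solvable_of_ker_le_range N.subtype (QuotientGroup.mk' N)
    (by rw [QuotientGroup.ker_mk', Subgroup.range_subtype]) (hG' := h1) (hG'' := h2)

lemma sup_solvable {G : Type*} [Group G] (M N : Subgroup G) [N.Normal]
    (hM : IsSolvable M) (hN : IsSolvable N) : IsSolvable (M ⊔ N : Subgroup G) := by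
  haveI : Group.IsSolvable M := hM; haveI : Group.IsSolvable N := hN
  have h1 : IsSolvable (N.subgroupOf (M ⊔ N)) :=
    solvable_of_surjective (f := (Subgroup.subgroupOfEquivOfLe (le_sup_right : N ≤ M ⊔ N)).symm.toMonoidHom) (Subgroup.subgroupOfEquivOfLe (le_sup_right : N ≤ M ⊔ N)).symm.surjective
  have h2 : IsSolvable ((M ⊔ N : Subgroup G) ⧸ N.subgroupOf (M ⊔ N)) :=
    solvable_of_surjective (f := (QuotientGroup.quotientInfEquivProdNormalQuotient M N).toMonoidHom) (QuotientGroup.quotientInfEquivProdNormalQuotient M N).surjective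
  exact isSolvable_of_quot _ h1 h2

lemma solRadical_mem {G : Type*} [Group G] [Finite G] :
    solRadical G ∈ {N : Subgroup G | N.Normal ∧ IsSolvable N} := by
  have hfin : {N : Subgroup G | N.Normal ∧ IsSolvable N}.Finite := Set.toFinite _
  have hsup : solRadical G = hfin.toFinset.sup id := by
    rw [Finset.sup_id_eq_sSup, Set.Finite.coe_toFinset]; rfl
  rw [hsup]
  refine Finset.sup_induction ⟨inferInstance, (inferInstance : Group.IsSolvable (⊥ : Subgroup G))⟩ ?_ ?_
  · rintro a ⟨ha1, ha2⟩ b ⟨hb1, hb2⟩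
    haveI := hb1
    exact ⟨Subgroup.sup_normal a b, sup_solvable a b ha2 hb2⟩
  · intro N hN
    simpa using (hfin.mem_toFinset.mp hN)

lemma solRadical_solvable (G : Type*) [Group G] [Finite G] : IsSolvable (solRadical G) :=
  solRadical_mem.2

lemma comap_mk_solvable {G : Type*} [Group G] [Finite G]
    (T : Subgroup (G ⧸ solRadical G)) (hT : IsSolvable T) :
    IsSolvable (T.comap (QuotientGroup.mk' (solRadical G))) := by
  set R := solRadical G
  set P := T.comap (QuotientGroup.mk' R) with hP
  have hRP : R ≤ P := by
    intro r hr
    have : QuotientGroup.mk' R r = 1 := (QuotientGroup.eq_one_iff r).mpr hr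
    simp [hP, Subgroup.mem_comap, this, Subgroup.one_mem]
  haveI : Group.IsSolvable R := solRadical_solvable G
  haveI : Group.IsSolvable T := hT
  refine solvable_of_ker_le_range (Subgroup.inclusion hRP)
    (MonoidHom.codRestrict ((QuotientGroup.mk' R).comp P.subtype) T (fun p => p.2)) ?_
  intro x hx
  replace hx : QuotientGroup.mk' R (x : G) = 1 := congrArg Subtype.val (MonoidHom.mem_ker.mp hx)
  rw [Subgroup.inclusion_range, Subgroup.mem_subgroupOf]
  exact (QuotientGroup.eq_one_iff (x : G)).mp hx

lemma solRadical_quot_bot (G : Type*) [Group G] [Finite G] :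
    solRadical (G ⧸ solRadical G) = ⊥ := by
  set R := solRadical G
  set T := solRadical (G ⧸ R) with hTdef
  have hT : IsSolvable T := solRadical_solvable _
  have hPsol : IsSolvable (T.comap (QuotientGroup.mk' R)) := comap_mk_solvable T hT
  have hPn : (T.comap (QuotientGroup.mk' R)).Normal := Subgroup.Normal.comap inferInstance _
  have hle : T.comap (QuotientGroup.mk' R) ≤ R := le_sSup ⟨hPn, hPsol⟩
  have hb : T ≤ ⊥ := by
    rw [← Subgroup.map_comap_eq_self_of_surjective (QuotientGroup.mk'_surjective R) T]
    calc Subgroup.map (QuotientGroup.mk' R) (T.comap (QuotientGroup.mk' R))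
        ≤ Subgroup.map (QuotientGroup.mk' R) R := Subgroup.map_mono hle
      _ = ⊥ := (Subgroup.map_eq_bot_iff _).mpr (by rw [QuotientGroup.ker_mk'])
  exact le_bot_iff.mp hb


lemma zpowers_solvable {G : Type*} [Group G] (a : G) : IsSolvable (Subgroup.zpowers a) := by
  apply isSolvable_of_comm
  intro x y
  ext
  obtain ⟨m, hm⟩ := Subgroup.mem_zpowers_iff.mp x.2
  obtain ⟨n, hn⟩ := Subgroup.mem_zpowers_iff.mp y.2
  simp only [Subgroup.coe_mul]
  rw [← hm, ← hn, ← zpow_add, ← zpow_add, add_comm]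

lemma solvable_closure_pair {G : Type*} [Group G] (a b : G) (hb : b ∈ Subgroup.zpowers a) :
    IsSolvable (Subgroup.closure ({a, b} : Set G)) := by
  refine solvable_of_le ?_ (zpowers_solvable a)
  rw [Subgroup.closure_le]
  rintro x hx
  rcases hx with rfl | rfl
  · exact Subgroup.mem_zpowers _
  · exact hb

lemma sol_iff {G : Type*} [Group G] [Finite G] (v g : G) :
    IsSolvable (Subgroup.closure ({v, g} : Set G)) ↔
    IsSolvable (Subgroup.closure ({(v : G ⧸ solRadical G), (g : G ⧸ solRadical G)} :
      Set (G ⧸ solRadical G))) := by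
  constructor
  · intro h
    haveI : Group.IsSolvable (Subgroup.closure ({v, g} : Set G)) := h
    have hmap : (Subgroup.closure ({v, g} : Set G)).map (QuotientGroup.mk' (solRadical G)) =
        Subgroup.closure ({(v : G ⧸ solRadical G), (g : G ⧸ solRadical G)} :
          Set (G ⧸ solRadical G)) := by
      rw [MonoidHom.map_closure, Set.image_pair]
      rfl
    rw [← hmap]
    exact solvable_of_surjective
      (f := (QuotientGroup.mk' (solRadical G)).subgroupMap (Subgroup.closure {v, g}))
      (MonoidHom.subgroupMap_surjective _ _)
  · intro h
    refine solvable_of_le ?_ (comap_mk_solvable _ h)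
    rw [Subgroup.closure_le]
    rintro x hx
    rcases hx with rfl | rfl <;>
      · simp only [SetLike.mem_coe, Subgroup.mem_comap]
        exact Subgroup.subset_closure (by simp)

lemma ncard_preimage_mk {G : Type*} [Group G] [Finite G] (T : Set (G ⧸ solRadical G)) :
    ((QuotientGroup.mk ⁻¹' T : Set G)).ncard = Nat.card (solRadical G) * T.ncard := by
  rw [← Nat.card_coe_set_eq, ← Nat.card_coe_set_eq,
    Nat.card_congr (QuotientGroup.preimageMkEquivSubgroupProdSet (solRadical G) T),
    Nat.card_prod]

theorem stmt7 {G : Type*} [Group G] [Fintype G] (hG : ¬ IsSolvable G)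
    (v : G) (hv : v ∉ solRadical G) :
    ((1 + solDeg G v : ℚ)) /
      (1 + solDeg (G ⧸ solRadical G) ((v : G ⧸ solRadical G)) : ℚ) =
      (Nat.card (solRadical G) : ℚ) := by
  classical
  have hbot := solRadical_quot_bot G
  set Q := G ⧸ solRadical G with hQ
  set Sv : Set G := {g | IsSolvable (Subgroup.closure ({v, g} : Set G))} with hSv
  set Sq : Set Q := {h | IsSolvable (Subgroup.closure ({(v : Q), h} : Set Q))} with hSq
  have hvQ1 : (v : Q) ≠ 1 := fun h => hv ((QuotientGroup.eq_one_iff v).mp h)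
  have hvSq : (v : Q) ∈ Sq := solvable_closure_pair _ _ (Subgroup.mem_zpowers _)
  have h1Sq : (1 : Q) ∈ Sq := solvable_closure_pair _ _ (Subgroup.one_mem _)
  have hvSv : v ∈ Sv := solvable_closure_pair _ _ (Subgroup.mem_zpowers _)
  -- degree in the quotient
  have hq : Sq.ncard = solDeg Q (v : Q) + 2 := by
    have hset : {h : Q | h ∉ solRadical Q ∧ h ≠ (v : Q) ∧
        IsSolvable (Subgroup.closure ({(v : Q), h} : Set Q))} = Sq \ {1, (v : Q)} := by
      ext h
      simp only [Set.mem_setOf_eq, Set.mem_diff, Set.mem_insert_iff, Set.mem_singleton_iff,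
        (show solRadical Q = ⊥ from hbot), Subgroup.mem_bot, hSq]
      tauto
    have hsub : ({1, (v : Q)} : Set Q) ⊆ Sq := by
      rintro x (rfl | rfl)
      exacts [h1Sq, hvSq]
    have h2 : ({1, (v : Q)} : Set Q).ncard = 2 := Set.ncard_pair hvQ1.symm
    have hd := Set.ncard_diff hsub (Set.toFinite _)
    have hle : ({1, (v : Q)} : Set Q).ncard ≤ Sq.ncard :=
      Set.ncard_le_ncard hsub (Set.toFinite _)
    rw [solDeg, hset, hd, h2]
    omega
  have hq1 : (Sq \ {1}).ncard = solDeg Q (v : Q) + 1 := by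
    have hsub : ({1} : Set Q) ⊆ Sq := Set.singleton_subset_iff.mpr h1Sq
    have hd := Set.ncard_diff hsub (Set.toFinite _)
    rw [hd, Set.ncard_singleton, hq]
    omega
  -- degree in G
  have hGdeg : (Sv \ (solRadical G : Set G)).ncard = solDeg G v + 1 := by
    have hset : {g : G | g ∉ solRadical G ∧ g ≠ v ∧
        IsSolvable (Subgroup.closure ({v, g} : Set G))}
        = (Sv \ (solRadical G : Set G)) \ {v} := by
      ext g
      simp only [Set.mem_setOf_eq, Set.mem_diff, Set.mem_singleton_iff, SetLike.mem_coe, hSv]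
      tauto
    have hvmem : v ∈ Sv \ (solRadical G : Set G) := ⟨hvSv, hv⟩
    have := Set.ncard_diff_singleton_add_one hvmem (Set.toFinite _)
    rw [solDeg, hset]
    omega
  have hpre : Sv \ (solRadical G : Set G) = QuotientGroup.mk ⁻¹' (Sq \ {1}) := by
    ext g
    simp only [Set.mem_diff, Set.mem_preimage, Set.mem_singleton_iff, SetLike.mem_coe,
      hSv, hSq, Set.mem_setOf_eq]
    rw [sol_iff v g, QuotientGroup.eq_one_iff]
    exact Iff.rfl
  have key : solDeg G v + 1 = Nat.card (solRadical G) * (solDeg Q (v : Q) + 1) := by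
    rw [← hGdeg, ← hq1, hpre, ncard_preimage_mk]
  have hcast := congrArg (Nat.cast : ℕ → ℚ) key
  push_cast at hcast
  have hne : ((1 : ℚ) + (solDeg Q (v : Q) : ℚ)) ≠ 0 := by positivity
  rw [div_eq_iff hne]
  linarith
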